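/- The velocities of any solution remain uniformly bounded: max_i |v_i(t)|^p ≤ max( max_i |v_i(0)|^p , max_i θ_i(0) ) for all t ≥ 0. In particular there is a constant C, depending only on the initial data and the parameters of the system, such that max_i |v_i(t)| ≤ C for all t ≥ 0. -/

import Mathlib

open Filter Topology Finset Real

lemma crossing_aux {N : ℕ} (f f' : Fin N → ℝ → ℝ)
    (hf : ∀ i t, (0:ℝ) ≤ t → HasDerivAt (f i) (f' i t) t)
    (c : ℝ) {ε : ℝ} (hε : 0 < ε)
    (h0 : ∀ i, f i 0 < c + ε)
    (hkey : ∀ i t, 0 ≤ t → (∀ j, f j t ≤ f i t) → c < f i t → f' i t ≤ 0) :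
    ∀ i t, 0 ≤ t → f i t < c + ε * Real.exp t := by
  by_contra hcon
  push_neg at hcon
  obtain ⟨i0, t0, ht0, hge⟩ := hcon
  set S : Set ℝ := ⋃ i, (Set.Ici 0 ∩ (fun t => c + ε * Real.exp t - f i t) ⁻¹' Set.Iic 0) with hS
  have hmem : ∀ t : ℝ, t ∈ S ↔ 0 ≤ t ∧ ∃ i, c + ε * Real.exp t ≤ f i t := by
    intro t
    simp only [hS, Set.mem_iUnion, Set.mem_inter_iff, Set.mem_Ici, Set.mem_preimage,
      Set.mem_Iic, sub_nonpos]
    constructor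
    · rintro ⟨i, h1, h2⟩; exact ⟨h1, i, h2⟩
    · rintro ⟨h1, i, h2⟩; exact ⟨i, h1, h2⟩
  have hSne : S.Nonempty := ⟨t0, (hmem t0).2 ⟨ht0, i0, hge⟩⟩
  have hSbdd : BddBelow S := ⟨0, fun t ht => ((hmem t).1 ht).1⟩
  have hclosed : IsClosed S := by
    apply isClosed_iUnion_of_finite
    intro i
    apply ContinuousOn.preimage_isClosed_of_isClosed _ isClosed_Ici isClosed_Iic
    apply ContinuousOn.sub (by fun_prop)
    intro t ht
    exact ((hf i t ht).continuousAt).continuousWithinAt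
  set T := sInf S with hT
  have hTS : T ∈ S := hclosed.csInf_mem hSne hSbdd
  obtain ⟨hT0, i, hi⟩ := (hmem T).1 hTS
  have hTpos : 0 < T := by
    rcases hT0.lt_or_eq with h | h
    · exact h
    · exfalso
      have := h0 i
      rw [← h, Real.exp_zero, mul_one] at hi
      linarith
  have hlt : ∀ t, 0 ≤ t → t < T → ∀ j, f j t < c + ε * Real.exp t := by
    intro t ht htT j
    by_contra h
    push_neg at h
    exact absurd (csInf_le hSbdd ((hmem t).2 ⟨ht, j, h⟩)) (not_le.2 htT)
  have hle : ∀ j, f j T ≤ c + ε * Real.exp T := by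
    intro j
    have hcont : ContinuousAt (f j) T := (hf j T hT0).continuousAt
    have htend : Tendsto (fun t => f j t - (c + ε * Real.exp t)) (𝓝[<] T)
        (𝓝 (f j T - (c + ε * Real.exp T))) := by
      apply Tendsto.mono_left _ nhdsWithin_le_nhds
      exact (hcont.sub (by fun_prop)).tendsto
    have hev : ∀ᶠ t in 𝓝[<] T, f j t - (c + ε * Real.exp t) ≤ 0 := by
      filter_upwards [Ioo_mem_nhdsLT_of_mem (Set.mem_Ioc.2 ⟨hTpos, le_refl T⟩)] with t ht
      exact sub_nonpos.2 (hlt t ht.1.le ht.2 j).le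
    have := le_of_tendsto htend hev
    linarith
  have heq : f i T = c + ε * Real.exp T := le_antisymm (hle i) hi
  have hmax : ∀ j, f j T ≤ f i T := fun j => (hle j).trans heq.ge
  have hcT : c < f i T := by
    rw [heq]; nlinarith [Real.exp_pos T]
  have hder : f' i T ≤ 0 := hkey i T hT0 hmax hcT
  have hb : HasDerivAt (fun t => c + ε * Real.exp t) (ε * Real.exp T) T := by
    simpa using ((Real.hasDerivAt_exp T).const_mul ε).const_add c
  have hh : HasDerivAt (fun t => f i t - (c + ε * Real.exp t)) (f' i T - ε * Real.exp T) T :=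
    (hf i T hT0).sub hb
  have hneg : f' i T - ε * Real.exp T < 0 := by nlinarith [Real.exp_pos T]
  have hslope := hasDerivAt_iff_tendsto_slope.1 hh
  have hev2 : ∀ᶠ t in 𝓝[<] T, slope (fun t => f i t - (c + ε * Real.exp t)) T t < 0 := by
    have h1 := hslope.eventually_lt_const hneg
    exact h1.filter_mono (nhdsWithin_mono T (fun t ht => ne_of_lt ht))
  have hev3 : ∀ᶠ t in 𝓝[<] T, t ∈ Set.Ioo (0:ℝ) T :=
    Ioo_mem_nhdsLT_of_mem (Set.mem_Ioc.2 ⟨hTpos, le_refl T⟩)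
  obtain ⟨t, hs, ht⟩ := (hev2.and hev3).exists
  have hTne : f i T - (c + ε * Real.exp T) = 0 := by rw [heq]; ring
  rw [slope_def_field] at hs
  have h1 : t - T < 0 := sub_neg.2 ht.2
  have : f i t - (c + ε * Real.exp t) > 0 := by
    have := hs
    rw [div_neg_iff] at this
    rcases this with ⟨h2, h3⟩ | ⟨h2, h3⟩
    · linarith
    · rw [hTne, sub_zero] at h2; linarith
  exact absurd (hlt t ht.1.le ht.2 i) (by linarith)

lemma crossing_bound {N : ℕ} (f f' : Fin N → ℝ → ℝ)
    (hf : ∀ i t, (0:ℝ) ≤ t → HasDerivAt (f i) (f' i t) t)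
    (c : ℝ)
    (h0 : ∀ i, f i 0 ≤ c)
    (hkey : ∀ i t, 0 ≤ t → (∀ j, f j t ≤ f i t) → c < f i t → f' i t ≤ 0) :
    ∀ i t, 0 ≤ t → f i t ≤ c := by
  intro i t ht
  apply le_of_forall_pos_le_add
  intro δ hδ
  have hε : 0 < δ / Real.exp t := div_pos hδ (Real.exp_pos t)
  have := crossing_aux f f' hf c hε (fun i => lt_of_le_of_lt (h0 i) (by linarith)) hkey i t ht
  rw [div_mul_cancel₀ _ (Real.exp_pos t).ne'] at this
  linarith

theorem velocity_upper_bound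
    {n N : ℕ}
    (m : Fin N → ℝ) (hm : ∀ j, 0 < m j)
    (φ : ℝ → ℝ) (hφc : Continuous φ)
    (hφpos : ∀ r, 0 ≤ r → 0 < φ r)
    (hφanti : AntitoneOn φ (Set.Ici 0))
    (hφbdd : ∃ Cφ : ℝ, ∀ r, 0 ≤ r → φ r ≤ Cφ)
    {σ p κ : ℝ} (hσ : 0 < σ) (hp : 0 < p) (hκ : 0 ≤ κ)
    (x v : Fin N → ℝ → EuclideanSpace ℝ (Fin (n + 1)))
    (θ : Fin N → ℝ → ℝ)
    (hθpos : ∀ i t, 0 ≤ t → 0 < θ i t)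
    (hx : ∀ i t, 0 ≤ t → HasDerivAt (x i) (v i t) t)
    (hv : ∀ i t, 0 ≤ t → HasDerivAt (v i)
      ((∑ j, (m j * φ ‖x i t - x j t‖) • (v j t - v i t))
        + (σ * (θ i t - ‖v i t‖ ^ p)) • v i t) t)
    (hθode : ∀ i t, 0 ≤ t → HasDerivAt (θ i)
      (κ * ∑ j, m j * φ ‖x i t - x j t‖ * (θ j t - θ i t)) t) :
    (∀ i, ∀ t, 0 ≤ t →
      ‖v i t‖ ^ p ≤ max (⨆ j, ‖v j 0‖ ^ p) (⨆ j, θ j 0)) ∧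
    ∃ C : ℝ, ∀ i, ∀ t, 0 ≤ t → ‖v i t‖ ≤ C := by
  rcases Nat.eq_zero_or_pos N with hN | hN
  · subst hN
    exact ⟨fun i => i.elim0, 0, fun i => i.elim0⟩
  have hne : Nonempty (Fin N) := ⟨⟨0, hN⟩⟩
  set Θ : ℝ := ⨆ j, θ j 0 with hΘdef
  set V0 : ℝ := ⨆ j, ‖v j 0‖ ^ p with hV0def
  set Ms : ℝ := max V0 Θ with hMsdef
  have hbddθ : BddAbove (Set.range fun j => θ j 0) := (Set.finite_range _).bddAbove
  have hbddv : BddAbove (Set.range fun j => ‖v j 0‖ ^ p) := (Set.finite_range _).bddAbove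
  have hΘle : ∀ i : Fin N, θ i 0 ≤ Θ := fun i => le_ciSup hbddθ i
  have hV0le : ∀ i : Fin N, ‖v i 0‖ ^ p ≤ V0 := fun i => le_ciSup hbddv i
  have hMspos : 0 < Ms :=
    lt_of_lt_of_le (hθpos ⟨0, hN⟩ 0 le_rfl) ((hΘle _).trans (le_max_right _ _))
  -- Step 1: θ bound
  have hθbd : ∀ i t, 0 ≤ t → θ i t ≤ Θ := by
    apply crossing_bound θ
      (fun i t => κ * ∑ j, m j * φ ‖x i t - x j t‖ * (θ j t - θ i t)) hθode Θ hΘle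
    intro i t ht hmax _
    apply mul_nonpos_of_nonneg_of_nonpos hκ
    apply Finset.sum_nonpos
    intro j _
    apply mul_nonpos_of_nonneg_of_nonpos
    · exact mul_nonneg (hm j).le (hφpos _ (norm_nonneg _)).le
    · exact sub_nonpos.2 (hmax j)
  -- Step 2: velocity bound
  set Q : ℝ := Ms ^ (1 / p) with hQdef
  have hQpos : 0 < Q := Real.rpow_pos_of_pos hMspos _
  have hQp : Q ^ p = Ms := by
    rw [hQdef, ← Real.rpow_mul hMspos.le, one_div, inv_mul_cancel₀ hp.ne', Real.rpow_one]
  have hQp' : Q ^ p = Ms := hQp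
  have hle0 : ∀ i : Fin N, ‖v i 0‖ ≤ Q := by
    intro i
    by_contra h
    push_neg at h
    have := Real.rpow_lt_rpow hQpos.le h hp
    rw [hQp] at this
    exact absurd ((hV0le i).trans (le_max_left _ _)) (not_le.2 this)
  have hVbd : ∀ i t, 0 ≤ t → ‖v i t‖ ≤ Q := by
    have key : ∀ i t, 0 ≤ t → ‖v i t‖ ^ 2 ≤ Q ^ 2 := by
      apply crossing_bound (fun i t => ‖v i t‖ ^ 2)
        (fun i t => 2 * (inner ℝ (v i t)
          ((∑ j, (m j * φ ‖x i t - x j t‖) • (v j t - v i t))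
            + (σ * (θ i t - ‖v i t‖ ^ p)) • v i t) : ℝ))
      · -- derivatives
        intro i t ht
        have h1 := HasDerivAt.inner ℝ (hv i t ht) (hv i t ht)
        have heq : (fun s => ‖v i s‖ ^ 2) = fun s => (inner ℝ (v i s) (v i s) : ℝ) := by
          funext s; rw [real_inner_self_eq_norm_sq]
        rw [heq]
        refine h1.congr_deriv ?_
        rw [real_inner_comm]; ring
      · -- initial condition
        intro i
        exact pow_le_pow_left₀ (norm_nonneg _) (hle0 i) 2
      · -- key dissipation
        intro i t ht hmax hc
        have hvi : Q < ‖v i t‖ := lt_of_pow_lt_pow_left₀ 2 (norm_nonneg _) hc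
        have hnj : ∀ j, ‖v j t‖ ≤ ‖v i t‖ := by
          intro j
          exact (pow_le_pow_iff_left₀ (norm_nonneg _) (norm_nonneg _) two_ne_zero).1 (hmax j)
        have hpgt : Ms < ‖v i t‖ ^ p := by
          have := Real.rpow_lt_rpow hQpos.le hvi hp
          rwa [hQp] at this
        have hθle : θ i t ≤ ‖v i t‖ ^ p :=
          ((hθbd i t ht).trans (le_max_right _ _)).trans hpgt.le
        have hinner : (inner ℝ (v i t)
            ((∑ j, (m j * φ ‖x i t - x j t‖) • (v j t - v i t))
              + (σ * (θ i t - ‖v i t‖ ^ p)) • v i t) : ℝ)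
            = (∑ j, (m j * φ ‖x i t - x j t‖) * ((inner ℝ (v i t) (v j t) : ℝ) - ‖v i t‖ ^ 2))
              + (σ * (θ i t - ‖v i t‖ ^ p)) * ‖v i t‖ ^ 2 := by
          rw [inner_add_right, inner_sum]
          simp only [real_inner_smul_right, inner_sub_right, real_inner_self_eq_norm_sq]
        rw [hinner]
        have hsum : (∑ j, (m j * φ ‖x i t - x j t‖) * ((inner ℝ (v i t) (v j t) : ℝ) - ‖v i t‖ ^ 2)) ≤ 0 := by
          apply Finset.sum_nonpos
          intro j _
          apply mul_nonpos_of_nonneg_of_nonpos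
          · exact mul_nonneg (hm j).le (hφpos _ (norm_nonneg _)).le
          · have h1 : (inner ℝ (v i t) (v j t) : ℝ) ≤ ‖v i t‖ * ‖v j t‖ := real_inner_le_norm _ _
            nlinarith [hnj j, norm_nonneg (v i t), norm_nonneg (v j t)]
        have hfric : (σ * (θ i t - ‖v i t‖ ^ p)) * ‖v i t‖ ^ 2 ≤ 0 := by
          apply mul_nonpos_of_nonpos_of_nonneg
          · exact mul_nonpos_of_nonneg_of_nonpos hσ.le (sub_nonpos.2 hθle)
          · positivity
        nlinarith
    intro i t ht
    exact (pow_le_pow_iff_left₀ (norm_nonneg _) hQpos.le two_ne_zero).1 (key i t ht)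
  constructor
  · intro i t ht
    have := Real.rpow_le_rpow (norm_nonneg _) (hVbd i t ht) hp.le
    rwa [hQp] at this
  · exact ⟨Q, hVbd⟩
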